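/- Blackwell-style key inequality for regret-matching: with the setup of regret-matching (cumulative regrets R^t(a), policy proportional to positive regrets), the sum of squared positive regrets satisfies ∑_a ([R^{t+1}(a)]^+)² ≤ ∑_a ([R^t(a)]^+)² + ∑_a (r^{t+1}(a) − π^{t+1}·r^{t+1})², where π^{t+1} is the regret-matching policy computed from R^t. -/

import Mathlib

/-- Pointwise bound: `(max (x+d) 0)^2 ≤ (max x 0)^2 + 2 * max x 0 * d + d^2`. -/
lemma max_add_sq_le (x d : ℝ) :
    (max (x + d) 0) ^ 2 ≤ (max x 0) ^ 2 + 2 * max x 0 * d + d ^ 2 := by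
  have h1 : max (x + d) 0 ≤ |max x 0 + d| := by
    rcases le_or_gt (x + d) 0 with h | h
    · simpa [max_eq_right h] using abs_nonneg (max x 0 + d)
    · calc max (x + d) 0 = x + d := max_eq_left h.le
        _ ≤ max x 0 + d := by gcongr; exact le_max_left _ _
        _ ≤ |max x 0 + d| := le_abs_self _
  have h2 : (max (x + d) 0) ^ 2 ≤ (max x 0 + d) ^ 2 := by
    rw [← sq_abs (max x 0 + d)]
    exact pow_le_pow_left₀ (le_max_right _ _) h1 2
  nlinarith [h2]

/-- Blackwell-style key inequality for regret matching: the sum of squared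
positive cumulative regrets grows by at most the sum of squared instantaneous
regrets, when the policy is the regret-matching policy computed from the
current cumulative regrets. -/
theorem regret_matching_potential (A : ℕ) (hA : 0 < A)
    (R r π R' : Fin A → ℝ)
    (hπ : ∀ a, π a =
      if 0 < ∑ b, max (R b) 0
      then max (R a) 0 / ∑ b, max (R b) 0
      else 1 / (A : ℝ))
    (hR' : ∀ a, R' a = R a + (r a - ∑ b, π b * r b)) :
    ∑ a, (max (R' a) 0) ^ 2 ≤
      ∑ a, (max (R a) 0) ^ 2 + ∑ a, (r a - ∑ b, π b * r b) ^ 2 := by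
  set c : ℝ := ∑ b, π b * r b with hc
  have key : ∑ a, max (R a) 0 * (r a - c) = 0 := by
    by_cases hS : 0 < ∑ b, max (R b) 0
    · have hπ' : ∀ a, π a = max (R a) 0 / ∑ b, max (R b) 0 := fun a => by
        rw [hπ a, if_pos hS]
      have hcval : c = (∑ a, max (R a) 0 * r a) / ∑ b, max (R b) 0 := by
        rw [hc]
        rw [Finset.sum_div]
        exact Finset.sum_congr rfl fun a _ => by rw [hπ' a, div_mul_eq_mul_div]
      have hSne : (∑ b, max (R b) 0) ≠ 0 := hS.ne'
      have : ∑ a, max (R a) 0 * (r a - c)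
          = (∑ a, max (R a) 0 * r a) - (∑ a, max (R a) 0) * c := by
        rw [Finset.sum_mul, ← Finset.sum_sub_distrib]
        exact Finset.sum_congr rfl fun a _ => by ring
      rw [this, hcval]
      field_simp
      ring
    · have h0 : ∀ a, max (R a) 0 = 0 := by
        intro a
        have hnn : ∀ b ∈ Finset.univ, (0:ℝ) ≤ max (R b) 0 :=
          fun b _ => le_max_right _ _
        have := Finset.sum_nonneg hnn
        have hz : ∑ b, max (R b) 0 = 0 := le_antisymm (not_lt.mp hS) this
        have := (Finset.sum_eq_zero_iff_of_nonneg hnn).mp hz a (Finset.mem_univ a)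
        exact this
      simp [h0]
  calc ∑ a, (max (R' a) 0) ^ 2
      ≤ ∑ a, ((max (R a) 0) ^ 2 + 2 * max (R a) 0 * (r a - c) + (r a - c) ^ 2) := by
        apply Finset.sum_le_sum
        intro a _
        rw [hR' a]
        exact max_add_sq_le (R a) (r a - c)
    _ = ∑ a, (max (R a) 0) ^ 2 + 2 * (∑ a, max (R a) 0 * (r a - c))
          + ∑ a, (r a - c) ^ 2 := by
        rw [Finset.mul_sum]
        rw [← Finset.sum_add_distrib, ← Finset.sum_add_distrib]
        exact Finset.sum_congr rfl fun a _ => by ring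
    _ = ∑ a, (max (R a) 0) ^ 2 + ∑ a, (r a - c) ^ 2 := by rw [key]; ring
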